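/- Suppose T satisfies the norm-limit property and (C_j) is an asymptotic expansion for T. Let f, g, h ∈ A and suppose that ‖m·i·(T^(m)(f)·T^(m)(g) − T^(m)(g)·T^(m)(f)) − T^(m)(h)‖ → 0 as m → ∞. Then h = i·(C_1(f,g) − C_1(g,f)). (In the paper, h = {f,g} is the Poisson bracket, so this is the derivation of the star-product condition C_1(f,g) − C_1(g,f) = −i{f,g} from the commutator asymptotics of the Berezin–Toeplitz operators.) -/

import Mathlib

open Filter Finset MeasureTheory

variable {X : Type*} [TopologicalSpace X] [CompactSpace X]
variable {H : ℕ → Type*} [∀ m, NormedAddCommGroup (H m)]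
  [∀ m, InnerProductSpace ℂ (H m)] [∀ m, CompleteSpace (H m)]

/-- `T` satisfies the norm-limit property if `‖T^(m)(f)‖ → ‖f‖_∞` for every `f ∈ C(X, ℂ)`. -/
def NormLimitProperty (T : ∀ m : ℕ, C(X, ℂ) →ₗ[ℂ] (H m →L[ℂ] H m)) : Prop :=
  ∀ f : C(X, ℂ), Tendsto (fun m : ℕ => ‖T m f‖) atTop (nhds ‖f‖)

/-- A family of ℂ-bilinear maps `C_j` is an asymptotic expansion for `T` if for all
`f, g` and every `N` there is `K ≥ 0` with
`‖T^(m)(f)·T^(m)(g) − ∑_{j<N} m^{−j} T^(m)(C_j(f,g))‖ ≤ K·m^{−N}` for all `m ≥ 1`. -/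
def IsAsymptoticExpansion (T : ∀ m : ℕ, C(X, ℂ) →ₗ[ℂ] (H m →L[ℂ] H m))
    (C : ℕ → C(X, ℂ) →ₗ[ℂ] C(X, ℂ) →ₗ[ℂ] C(X, ℂ)) : Prop :=
  ∀ (f g : C(X, ℂ)) (N : ℕ), ∃ K : ℝ, 0 ≤ K ∧ ∀ m : ℕ, 1 ≤ m →
    ‖T m f * T m g - ∑ j ∈ Finset.range N, ((m : ℂ)⁻¹) ^ j • T m (C j f g)‖
      ≤ K * ((m : ℝ)⁻¹) ^ N

/- STATEMENT 10: Suppose T satisfies the norm-limit property and (C_j) is an asymptotic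
expansion for T.  Let f, g, h ∈ A and suppose
‖m·i·(T^(m)(f)·T^(m)(g) − T^(m)(g)·T^(m)(f)) − T^(m)(h)‖ → 0 as m → ∞.
Then h = i·(C_1(f,g) − C_1(g,f)). -/

set_option maxHeartbeats 1000000 in
theorem asymptoticExpansion_coeff_one_antisym
    (T : ∀ m : ℕ, C(X, ℂ) →ₗ[ℂ] (H m →L[ℂ] H m))
    (hT : NormLimitProperty T)
    (C : ℕ → C(X, ℂ) →ₗ[ℂ] C(X, ℂ) →ₗ[ℂ] C(X, ℂ))
    (hC : IsAsymptoticExpansion T C)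
    (f g h : C(X, ℂ))
    (hcomm : Tendsto
      (fun m : ℕ =>
        ‖((m : ℂ) * Complex.I) • (T m f * T m g - T m g * T m f) - T m h‖)
      atTop (nhds 0)) :
    h = Complex.I • (C 1 f g - C 1 g f) := by
  obtain ⟨K1, hK1, hA⟩ := hC f g 2
  obtain ⟨K2, hK2, hB⟩ := hC g f 2
  set Δ0 : C(X, ℂ) := C 0 f g - C 0 g f with hΔ0def
  set Δ1 : C(X, ℂ) := C 1 f g - C 1 g f with hΔ1def
  -- Key bound coming from the asymptotic expansion at order N = 2
  have key : ∀ m : ℕ, 1 ≤ m →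
      ‖((m : ℂ) * Complex.I) • (T m f * T m g - T m g * T m f)
        - Complex.I • T m Δ1 - ((m : ℂ) * Complex.I) • T m Δ0‖
      ≤ (K1 + K2) * (m : ℝ)⁻¹ := by
    intro m hm
    have hm0 : (m : ℂ) ≠ 0 := Nat.cast_ne_zero.mpr (by omega)
    have hmR : (0 : ℝ) < (m : ℝ) := by exact_mod_cast Nat.lt_of_lt_of_le Nat.zero_lt_one hm
    have hid : ((m : ℂ) * Complex.I) • (T m f * T m g - T m g * T m f)
        - Complex.I • T m Δ1 - ((m : ℂ) * Complex.I) • T m Δ0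
        = ((m : ℂ) * Complex.I) •
          ((T m f * T m g - ∑ j ∈ Finset.range 2, ((m : ℂ)⁻¹) ^ j • T m (C j f g))
           - (T m g * T m f - ∑ j ∈ Finset.range 2, ((m : ℂ)⁻¹) ^ j • T m (C j g f))) := by
      simp only [hΔ0def, hΔ1def, map_sub, Finset.sum_range_succ, Finset.sum_range_zero,
        zero_add, pow_zero, pow_one, one_smul]
      match_scalars <;> field_simp <;> ring_nf
    rw [hid, norm_smul]
    have hnm : ‖(m : ℂ) * Complex.I‖ = (m : ℝ) := by
      simp
    rw [hnm]
    have h1 := hA m hm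
    have h2 := hB m hm
    have htri := norm_sub_le
      (T m f * T m g - ∑ j ∈ Finset.range 2, ((m : ℂ)⁻¹) ^ j • T m (C j f g))
      (T m g * T m f - ∑ j ∈ Finset.range 2, ((m : ℂ)⁻¹) ^ j • T m (C j g f))
    have hsq : (m : ℝ) * ((K1 + K2) * ((m : ℝ)⁻¹) ^ 2) = (K1 + K2) * (m : ℝ)⁻¹ := by
      field_simp
    nlinarith [htri, h1, h2, hsq, hmR.le]
  -- Step 1 : Δ0 = 0
  have hinv : Tendsto (fun m : ℕ => (m : ℝ)⁻¹) atTop (nhds 0) :=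
    tendsto_inv_atTop_zero.comp tendsto_natCast_atTop_atTop
  have hKinv : Tendsto (fun m : ℕ => (K1 + K2) * (m : ℝ)⁻¹) atTop (nhds 0) := by
    simpa using hinv.const_mul (K1 + K2)
  set S : ℕ → ℝ := fun m =>
    ‖((m : ℂ) * Complex.I) • (T m f * T m g - T m g * T m f) - T m h‖
      + ‖T m h‖ + ‖T m Δ1‖ + (K1 + K2) * (m : ℝ)⁻¹ with hSdef
  have hS : Tendsto S atTop (nhds (0 + ‖h‖ + ‖Δ1‖ + 0)) :=
    ((hcomm.add (hT h)).add (hT Δ1)).add hKinv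
  set L : ℝ := 0 + ‖h‖ + ‖Δ1‖ + 0 with hLdef
  have hSbound : ∀ᶠ m : ℕ in atTop, S m < L + 1 :=
    hS.eventually_lt_const (lt_add_one L)
  have hstep1 : ∀ m : ℕ, 1 ≤ m → (m : ℝ) * ‖T m Δ0‖ ≤ S m := by
    intro m hm
    have hkey := key m hm
    set U := ((m : ℂ) * Complex.I) • (T m f * T m g - T m g * T m f) with hU
    set V := T m h with hV
    set W := Complex.I • T m Δ1 with hW
    set Z := ((m : ℂ) * Complex.I) • T m Δ0 with hZ
    have heq : Z = ((U - V) + V) - W - (U - W - Z) := by abel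
    have e1 : ‖Z‖ ≤ ‖U - V‖ + ‖V‖ + ‖W‖ + ‖U - W - Z‖ := by
      have e0 : ‖Z‖ = ‖(U - V) + V - W - (U - W - Z)‖ := congrArg norm heq
      rw [e0]
      have h2 : ‖(U - V) + V - W - (U - W - Z)‖ ≤ ‖(U - V) + V - W‖ + ‖U - W - Z‖ :=
        norm_sub_le _ _
      have h3 : ‖(U - V) + V - W‖ ≤ ‖(U - V) + V‖ + ‖W‖ := norm_sub_le _ _
      have h4 : ‖(U - V) + V‖ ≤ ‖U - V‖ + ‖V‖ := norm_add_le _ _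
      linarith
    have hnZ : ‖Z‖ = (m : ℝ) * ‖T m Δ0‖ := by
      rw [hZ, norm_smul]; simp
    have hnW : ‖W‖ = ‖T m Δ1‖ := by
      rw [hW, norm_smul]; simp
    rw [hSdef]
    simp only []
    rw [hnZ, hnW] at e1
    linarith
  have hTΔ0small : ∀ᶠ m : ℕ in atTop, ‖T m Δ0‖ ≤ (L + 1) * (m : ℝ)⁻¹ := by
    filter_upwards [hSbound, eventually_ge_atTop 1] with m hSm hm
    have hmR : (0 : ℝ) < (m : ℝ) := by exact_mod_cast Nat.lt_of_lt_of_le Nat.zero_lt_one hm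
    have hb := (hstep1 m hm).trans hSm.le
    calc ‖T m Δ0‖ = (m : ℝ)⁻¹ * ((m : ℝ) * ‖T m Δ0‖) := by
          field_simp
      _ ≤ (m : ℝ)⁻¹ * (L + 1) := by
          gcongr
      _ = (L + 1) * (m : ℝ)⁻¹ := mul_comm _ _
  have hTΔ0zero : Tendsto (fun m : ℕ => ‖T m Δ0‖) atTop (nhds 0) := by
    refine squeeze_zero' (Eventually.of_forall fun m => norm_nonneg _) hTΔ0small ?_
    simpa using hinv.const_mul (L + 1)
  have hΔ0zero : Δ0 = 0 := by
    have := tendsto_nhds_unique (hT Δ0) hTΔ0zero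
    exact norm_eq_zero.mp this
  have hTΔ0 : ∀ m : ℕ, T m Δ0 = 0 := fun m => by rw [hΔ0zero, map_zero]
  -- Step 2 : conclude
  have hfinal : Tendsto (fun m : ℕ => ‖T m (h - Complex.I • Δ1)‖) atTop (nhds 0) := by
    have hbound : ∀ᶠ m : ℕ in atTop, ‖T m (h - Complex.I • Δ1)‖ ≤
        ‖((m : ℂ) * Complex.I) • (T m f * T m g - T m g * T m f) - T m h‖
          + (K1 + K2) * (m : ℝ)⁻¹ := by
      filter_upwards [eventually_ge_atTop 1] with m hm
      have hkey := key m hm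
      rw [hTΔ0 m, smul_zero, sub_zero] at hkey
      have hrw : T m (h - Complex.I • Δ1) = T m h - Complex.I • T m Δ1 := by
        rw [map_sub, (T m).map_smul]
      have heq : T m h - Complex.I • T m Δ1
          = -(((m : ℂ) * Complex.I) • (T m f * T m g - T m g * T m f) - T m h)
            + (((m : ℂ) * Complex.I) • (T m f * T m g - T m g * T m f)
               - Complex.I • T m Δ1) := by abel
      rw [hrw, heq]
      calc ‖_ + _‖ ≤ ‖-(((m : ℂ) * Complex.I) • (T m f * T m g - T m g * T m f) - T m h)‖
            + ‖((m : ℂ) * Complex.I) • (T m f * T m g - T m g * T m f)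
               - Complex.I • T m Δ1‖ := norm_add_le _ _
        _ ≤ _ := by rw [norm_neg]; gcongr
    refine squeeze_zero' (Eventually.of_forall fun m => norm_nonneg _) hbound ?_
    simpa using hcomm.add hKinv
  have := tendsto_nhds_unique (hT (h - Complex.I • Δ1)) hfinal
  have := norm_eq_zero.mp this
  rw [sub_eq_zero] at this
  exact this
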